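/- Let S be a finite semigroup containing a chain of idempotents of length n, i.e. distinct idempotents e₀, e₁, …, e_n ∈ S such that e_i·e_j = e_j·e_i = e_{min(i,j)} for all i, j. Then for any field k, the effective dimension of S over k is at least n. -/

import Mathlib

/-- If a finite semigroup `S` contains a chain of idempotents of length `n`
(that is, `n + 1` distinct idempotents `e₀ < e₁ < ⋯ < e_n` with
`e_i * e_j = e_j * e_i = e_{min i j}`), then every effective representation of
`S` by `m × m` matrices over a field `k` satisfies `n ≤ m`; in particular the
effective dimension of `S` over `k` is at least `n`. -/
theorem effDim_ge_of_chain_of_idempotents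
    {S : Type*} [Semigroup S] [Finite S] (k : Type*) [Field k]
    (n : ℕ) (e : Fin (n + 1) → S) (he : Function.Injective e)
    (hmul : ∀ i j : Fin (n + 1), e i * e j = e (min i j) ∧ e j * e i = e (min i j))
    (m : ℕ) (φ : S → Matrix (Fin m) (Fin m) k)
    (hinj : Function.Injective φ) (hhom : ∀ s t : S, φ (s * t) = φ s * φ t) :
    n ≤ m := by
  classical
  set P : Fin (n + 1) → ((Fin m → k) →ₗ[k] (Fin m → k)) :=
    fun i => Matrix.mulVecLin (φ (e i)) with hP
  -- for i ≤ j, P i = P j ∘ P i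
  have hcomp : ∀ i j : Fin (n + 1), P i ∘ₗ P j = Matrix.mulVecLin (φ (e i * e j)) := by
    intro i j
    rw [hhom, Matrix.mulVecLin_mul]
  have hle : ∀ i j : Fin (n + 1), i ≤ j →
      LinearMap.range (P i) ≤ LinearMap.range (P j) := by
    intro i j hij x hx
    obtain ⟨y, hy⟩ := hx
    refine ⟨P i y, ?_⟩
    have := congrArg (fun f => f y) (hcomp j i)
    simp only [LinearMap.coe_comp, Function.comp_apply] at this
    have hmin : e j * e i = e i := by
      have := (hmul j i).1
      rwa [min_eq_right hij] at this
    calc P j (P i y) = Matrix.mulVecLin (φ (e j * e i)) y := this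
      _ = P i y := by rw [hmin]
      _ = x := hy
  have hlt : ∀ i j : Fin (n + 1), i < j →
      LinearMap.range (P i) < LinearMap.range (P j) := by
    intro i j hij
    refine lt_of_le_of_ne (hle i j hij.le) ?_
    intro hEq
    have hPij : P i = P j := by
      refine LinearMap.ext fun x => ?_
      have hx : P j x ∈ LinearMap.range (P i) := hEq ▸ LinearMap.mem_range_self _ x
      obtain ⟨y, hy⟩ := hx
      have h1 : P i (P j x) = P j x := by
        rw [← hy]
        have := congrArg (fun f => f y) (hcomp i i)
        simp only [LinearMap.coe_comp, Function.comp_apply] at this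
        have hmin : e i * e i = e i := by
          have := (hmul i i).1; rwa [min_self] at this
        calc P i (P i y) = Matrix.mulVecLin (φ (e i * e i)) y := this
          _ = P i y := by rw [hmin]
      have h2 : P i (P j x) = P i x := by
        have := congrArg (fun f => f x) (hcomp i j)
        simp only [LinearMap.coe_comp, Function.comp_apply] at this
        have hmin : e i * e j = e i := by
          have := (hmul i j).1
          rwa [min_eq_left hij.le] at this
        calc P i (P j x) = Matrix.mulVecLin (φ (e i * e j)) x := this
          _ = P i x := by rw [hmin]
      rw [← h2, h1]
    have : φ (e i) = φ (e j) := by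
      apply Matrix.toLin'.injective
      refine LinearMap.ext fun x => ?_
      have hx := LinearMap.congr_fun hPij x
      simpa [hP, Matrix.toLin'_apply, Matrix.mulVecLin_apply] using hx
    exact absurd (he (hinj this)) hij.ne
  -- finrank of ranges is strictly monotone
  have hg : ∀ i : Fin (n + 1), (i : ℕ) ≤ Module.finrank k (LinearMap.range (P i)) := by
    intro i
    induction i using Fin.induction with
    | zero => exact Nat.zero_le _
    | succ i ih =>
      have hstep := Submodule.finrank_lt_finrank_of_lt
        (hlt i.castSucc i.succ Fin.castSucc_lt_succ)
      have hcs : (i.castSucc : ℕ) = (i : ℕ) := rfl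
      rw [hcs] at ih
      simp only [Fin.val_succ]
      omega
  have hlast := hg (Fin.last n)
  have hle_m : Module.finrank k (LinearMap.range (P (Fin.last n))) ≤ m := by
    have h1 := Submodule.finrank_le (LinearMap.range (P (Fin.last n)))
    simpa using h1
  simpa using hlast.trans hle_m
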